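/- arXiv:1607.05547 — 3 statements merged into one kernel-verified Lean document; each statement's English description precedes it below -/
import Mathlib

section
/- For all 1 ≤ k < l ≤ n, the diameter of the augmented path satisfies M(k,l) = max{ S(k,l), E(k,l), U(k,l), O(k,l) }. -/
noncomputable section

variable {X : Type*} [MetricSpace X]

/-- Path distance between vertices `i` and `j` of the path `p₁, …, pₙ`:
the sum of the edge weights `d(p_t, p_{t+1})` for `min i j ≤ t < max i j`. -/
def pathDist (p : ℕ → X) (i j : ℕ) : ℝ :=
  ∑ t ∈ Finset.Ico (min i j) (max i j), dist (p t) (p (t + 1))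

/-- Shortest-path distance between vertices `x` and `y` in the unicyclic graph
`P̄[k,l]` obtained by adding the shortcut `(p_k, p_l)` of weight `d(p_k, p_l)`. -/
def pbar (p : ℕ → X) (k l x y : ℕ) : ℝ :=
  min (pathDist p x y)
    (min (pathDist p x k + dist (p k) (p l) + pathDist p l y)
         (pathDist p x l + dist (p k) (p l) + pathDist p k y))

/-- The length `|C[k,l]|` of the cycle `C[k,l]`. -/
def cycleLen (p : ℕ → X) (k l : ℕ) : ℝ :=
  pathDist p k l + dist (p k) (p l)

/-- The cycle distance `c_{k,l}(x,y)` for `k ≤ x, y ≤ l`. -/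
def cycDist (p : ℕ → X) (k l x y : ℕ) : ℝ :=
  min (pathDist p x y) (cycleLen p k l - pathDist p x y)

/-- `S(k,l) = max_{k ≤ x ≤ l} p̄_{k,l}(1,x)`. -/
def Sfun (p : ℕ → X) (k l : ℕ) : ℝ :=
  sSup ((fun x => pbar p k l 1 x) '' Set.Icc k l)

/-- `E(k,l) = max_{k ≤ x ≤ l} p̄_{k,l}(x,n)`. -/
def Efun (p : ℕ → X) (n k l : ℕ) : ℝ :=
  sSup ((fun x => pbar p k l x n) '' Set.Icc k l)

/-- `U(k,l) = p̄_{k,l}(1,n)`. -/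
def Ufun (p : ℕ → X) (n k l : ℕ) : ℝ :=
  pbar p k l 1 n

/-- `O(k,l) = max_{k ≤ x < y ≤ l} c_{k,l}(x,y)`. -/
def Ofun (p : ℕ → X) (k l : ℕ) : ℝ :=
  sSup {r | ∃ x y : ℕ, k ≤ x ∧ x < y ∧ y ≤ l ∧ r = cycDist p k l x y}

/-- `N(k,l) = max (S(k,l), E(k,l), U(k,l))`. -/
def Nfun (p : ℕ → X) (n k l : ℕ) : ℝ :=
  max (Sfun p k l) (max (Efun p n k l) (Ufun p n k l))

/-- `M(k,l) = max_{1 ≤ x < y ≤ n} p̄_{k,l}(x,y)`, the diameter of `P̄[k,l]`. -/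
def Mfun (p : ℕ → X) (n k l : ℕ) : ℝ :=
  sSup {r | ∃ x y : ℕ, 1 ≤ x ∧ x < y ∧ y ≤ n ∧ r = pbar p k l x y}

section Helpers

variable (p : ℕ → X)

lemma pathDist_nonneg (i j : ℕ) : 0 ≤ pathDist p i j :=
  Finset.sum_nonneg fun _ _ => dist_nonneg

lemma pathDist_self (i : ℕ) : pathDist p i i = 0 := by
  simp [pathDist]

lemma pathDist_comm (i j : ℕ) : pathDist p i j = pathDist p j i := by
  simp [pathDist, min_comm, max_comm]

lemma pathDist_eq (i j : ℕ) (h : i ≤ j) :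
    pathDist p i j = ∑ t ∈ Finset.Ico i j, dist (p t) (p (t + 1)) := by
  simp [pathDist, min_eq_left h, max_eq_right h]

lemma pathDist_add {a b c : ℕ} (h1 : a ≤ b) (h2 : b ≤ c) :
    pathDist p a c = pathDist p a b + pathDist p b c := by
  rw [pathDist_eq p a c (h1.trans h2), pathDist_eq p a b h1, pathDist_eq p b c h2,
    Finset.sum_Ico_consecutive _ h1 h2]

lemma pathDist_mono {a b c d : ℕ} (h1 : a ≤ b) (h2 : b ≤ c) (h3 : c ≤ d) :
    pathDist p b c ≤ pathDist p a d := by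
  rw [pathDist_add p h1 (h2.trans h3), pathDist_add p h2 h3]
  have := pathDist_nonneg p a b
  have := pathDist_nonneg p c d
  linarith

lemma pbar_nonneg (k l x y : ℕ) : 0 ≤ pbar p k l x y := by
  have h1 := pathDist_nonneg p x y
  have h2 := pathDist_nonneg p x k
  have h3 := pathDist_nonneg p l y
  have h4 := pathDist_nonneg p x l
  have h5 := pathDist_nonneg p k y
  have h6 : (0:ℝ) ≤ dist (p k) (p l) := dist_nonneg
  unfold pbar
  refine le_min (by linarith) (le_min (by linarith) (by linarith))

lemma pbar_le_pathDist (k l x y : ℕ) : pbar p k l x y ≤ pathDist p x y :=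
  min_le_left _ _

lemma pbar_mono_left {k l x x' y : ℕ} (hx' : x' ≤ x) (hxk : x ≤ k) (hxy : x ≤ y)
    (hkl : k ≤ l) : pbar p k l x y ≤ pbar p k l x' y := by
  have h1 : pathDist p x y ≤ pathDist p x' y := pathDist_mono p hx' hxy le_rfl
  have h2 : pathDist p x k ≤ pathDist p x' k := pathDist_mono p hx' hxk le_rfl
  have h3 : pathDist p x l ≤ pathDist p x' l := pathDist_mono p hx' (hxk.trans hkl) le_rfl
  exact min_le_min h1 (min_le_min (by linarith) (by linarith))

lemma pbar_mono_right {k l x y y' : ℕ} (hkl : k ≤ l) (hxy : x ≤ y) (hly : l ≤ y)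
    (hy : y ≤ y') : pbar p k l x y ≤ pbar p k l x y' := by
  have h1 : pathDist p x y ≤ pathDist p x y' := pathDist_mono p le_rfl hxy hy
  have h2 : pathDist p l y ≤ pathDist p l y' := pathDist_mono p le_rfl hly hy
  have h3 : pathDist p k y ≤ pathDist p k y' := pathDist_mono p le_rfl (hkl.trans hly) hy
  exact min_le_min h1 (min_le_min (by linarith) (by linarith))

lemma pbar_eq_cycDist {k l x y : ℕ} (hkx : k ≤ x) (hxy : x ≤ y) (hyl : y ≤ l) :
    pbar p k l x y = cycDist p k l x y := by
  have hB := pathDist_nonneg p x y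
  have e1 : pathDist p x k = pathDist p k x := pathDist_comm p x k
  have e2 : pathDist p l y = pathDist p y l := pathDist_comm p l y
  have e3 : pathDist p x l = pathDist p x y + pathDist p y l := pathDist_add p hxy hyl
  have e4 : pathDist p k y = pathDist p k x + pathDist p x y := pathDist_add p hkx hxy
  have e5 : pathDist p k l = pathDist p k x + pathDist p x l := pathDist_add p hkx (hxy.trans hyl)
  unfold pbar cycDist cycleLen
  rw [e1, e2, e3, e4, e5, e3]
  have h1 : min (pathDist p k x + dist (p k) (p l) + pathDist p y l)
      ((pathDist p x y + pathDist p y l) + dist (p k) (p l)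
        + (pathDist p k x + pathDist p x y))
      = pathDist p k x + dist (p k) (p l) + pathDist p y l := min_eq_left (by linarith)
  rw [h1]
  congr 1
  ring

lemma pbar_one_k {k l : ℕ} (h1k : 1 ≤ k) (hkl : k ≤ l) :
    pbar p k l 1 k = pathDist p 1 k := by
  have e1 : pathDist p 1 l = pathDist p 1 k + pathDist p k l := pathDist_add p h1k hkl
  have e2 : pathDist p l k = pathDist p k l := pathDist_comm p l k
  have h2 := pathDist_nonneg p k l
  have h3 : (0:ℝ) ≤ dist (p k) (p l) := dist_nonneg
  unfold pbar
  rw [pathDist_self, e1, e2]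
  exact min_eq_left (le_min (by linarith) (by linarith))

lemma pbar_l_n {k l n : ℕ} (hkl : k ≤ l) (hln : l ≤ n) :
    pbar p k l l n = pathDist p l n := by
  have e1 : pathDist p k n = pathDist p k l + pathDist p l n := pathDist_add p hkl hln
  have e2 : pathDist p l k = pathDist p k l := pathDist_comm p l k
  have h2 := pathDist_nonneg p k l
  have h3 : (0:ℝ) ≤ dist (p k) (p l) := dist_nonneg
  unfold pbar
  rw [pathDist_self, e1, e2]
  exact min_eq_left (le_min (by linarith) (by linarith))

end Helpers

/-- For all `1 ≤ k < l ≤ n`, the diameter of the augmented path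
satisfies `M(k,l) = max (S(k,l), E(k,l), U(k,l), O(k,l))`. -/
theorem diameter_eq_max_of_four {X : Type*} [MetricSpace X]
    (n : ℕ) (hn : 2 ≤ n) (p : ℕ → X)
    (k l : ℕ) (hk : 1 ≤ k) (hkl : k < l) (hl : l ≤ n) :
    Mfun p n k l =
      max (Sfun p k l) (max (Efun p n k l) (max (Ufun p n k l) (Ofun p k l))) := by
  have h1n : 1 < n := lt_of_le_of_lt hk (lt_of_lt_of_le hkl hl)
  set B : ℝ := pathDist p 1 n with hB
  -- the sets involved
  set Mset : Set ℝ := {r | ∃ x y : ℕ, 1 ≤ x ∧ x < y ∧ y ≤ n ∧ r = pbar p k l x y} with hMset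
  have hMfun : Mfun p n k l = sSup Mset := rfl
  -- bounds
  have hMbdd : BddAbove Mset := by
    refine ⟨B, fun r hr => ?_⟩
    obtain ⟨x, y, hx, hxy, hy, rfl⟩ := hr
    exact (pbar_le_pathDist p k l x y).trans (pathDist_mono p hx hxy.le hy)
  have hSbdd : BddAbove ((fun x => pbar p k l 1 x) '' Set.Icc k l) := by
    refine ⟨B, fun r hr => ?_⟩
    obtain ⟨x, ⟨hkx, hxl⟩, rfl⟩ := hr
    exact (pbar_le_pathDist p k l 1 x).trans
      (pathDist_mono p le_rfl (hk.trans hkx) (hxl.trans hl))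
  have hEbdd : BddAbove ((fun x => pbar p k l x n) '' Set.Icc k l) := by
    refine ⟨B, fun r hr => ?_⟩
    obtain ⟨x, ⟨hkx, hxl⟩, rfl⟩ := hr
    exact (pbar_le_pathDist p k l x n).trans
      (pathDist_mono p (hk.trans hkx) (hxl.trans hl) le_rfl)
  have hObdd : BddAbove {r | ∃ x y : ℕ, k ≤ x ∧ x < y ∧ y ≤ l ∧ r = cycDist p k l x y} := by
    refine ⟨B, fun r hr => ?_⟩
    obtain ⟨x, y, hkx, hxy, hyl, rfl⟩ := hr
    exact (min_le_left _ _).trans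
      (pathDist_mono p (hk.trans hkx) hxy.le (hyl.trans hl))
  have hMne : Mset.Nonempty := ⟨pbar p k l k l, k, l, hk, hkl, hl, rfl⟩
  have h0M : (0:ℝ) ≤ sSup Mset :=
    le_trans (pbar_nonneg p k l k l) (le_csSup hMbdd ⟨k, l, hk, hkl, hl, rfl⟩)
  rw [hMfun]
  apply le_antisymm
  · -- M ≤ max
    apply csSup_le hMne
    rintro r ⟨x, y, hx, hxy, hy, rfl⟩
    by_cases hyk : y ≤ k
    · -- both left of k : use S via pbar(1,k)
      have h1 : pbar p k l x y ≤ pathDist p 1 k :=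
        (pbar_le_pathDist p k l x y).trans (pathDist_mono p hx hxy.le hyk)
      have h2 : pathDist p 1 k = pbar p k l 1 k := (pbar_one_k p hk hkl.le).symm
      have h3 : pbar p k l 1 k ≤ Sfun p k l :=
        le_csSup hSbdd ⟨k, ⟨le_rfl, hkl.le⟩, rfl⟩
      exact le_max_of_le_left (by linarith)
    · push_neg at hyk
      by_cases hlx : l ≤ x
      · -- both right of l : use E via pbar(l,n)
        have h1 : pbar p k l x y ≤ pathDist p l n :=
          (pbar_le_pathDist p k l x y).trans (pathDist_mono p hlx hxy.le hy)
        have h2 : pathDist p l n = pbar p k l l n := (pbar_l_n p hkl.le hl).symm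
        have h3 : pbar p k l l n ≤ Efun p n k l :=
          le_csSup hEbdd ⟨l, ⟨hkl.le, le_rfl⟩, rfl⟩
        exact le_max_of_le_right (le_max_of_le_left (by linarith))
      · push_neg at hlx
        by_cases hxk : x ≤ k
        · by_cases hyl : y ≤ l
          · -- x ≤ k < y ≤ l : use S via pbar(1,y)
            have h1 : pbar p k l x y ≤ pbar p k l 1 y :=
              pbar_mono_left p hx hxk hxy.le hkl.le
            have h3 : pbar p k l 1 y ≤ Sfun p k l :=
              le_csSup hSbdd ⟨y, ⟨hyk.le, hyl⟩, rfl⟩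
            exact le_max_of_le_left (h1.trans h3)
          · push_neg at hyl
            -- x ≤ k, l < y : use U
            have h1 : pbar p k l x y ≤ pbar p k l 1 y :=
              pbar_mono_left p hx hxk hxy.le hkl.le
            have h2 : pbar p k l 1 y ≤ pbar p k l 1 n :=
              pbar_mono_right p hkl.le (hx.trans hxy.le) hyl.le hy
            exact le_max_of_le_right (le_max_of_le_right
              (le_max_of_le_left (h1.trans h2)))
        · push_neg at hxk
          by_cases hyl : y ≤ l
          · -- k ≤ x < y ≤ l : use O
            have h1 : pbar p k l x y = cycDist p k l x y :=
              pbar_eq_cycDist p hxk.le hxy.le hyl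
            have h3 : cycDist p k l x y ≤ Ofun p k l :=
              le_csSup hObdd ⟨x, y, hxk.le, hxy, hyl, rfl⟩
            exact le_max_of_le_right (le_max_of_le_right
              (le_max_of_le_right (h1 ▸ h3)))
          · push_neg at hyl
            -- k ≤ x < l < y : use E via pbar(x,n)
            have h1 : pbar p k l x y ≤ pbar p k l x n :=
              pbar_mono_right p hkl.le hxy.le hyl.le hy
            have h3 : pbar p k l x n ≤ Efun p n k l :=
              le_csSup hEbdd ⟨x, ⟨hxk.le, hlx.le⟩, rfl⟩
            exact le_max_of_le_right (le_max_of_le_left (h1.trans h3))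
  · -- max ≤ M
    refine max_le ?_ (max_le ?_ (max_le ?_ ?_))
    · -- S ≤ M
      apply csSup_le ((Set.nonempty_Icc.mpr hkl.le).image _)
      rintro r ⟨x, ⟨hkx, hxl⟩, rfl⟩
      rcases lt_or_ge 1 x with h1x | hx1
      · exact le_csSup hMbdd ⟨1, x, le_rfl, h1x, hxl.trans hl, rfl⟩
      · have hx1' : x = 1 := le_antisymm hx1 (hk.trans hkx)
        subst hx1'
        have : pbar p k l 1 1 ≤ 0 := by
          simpa [pathDist_self] using pbar_le_pathDist p k l 1 1
        exact this.trans h0M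
    · -- E ≤ M
      apply csSup_le ((Set.nonempty_Icc.mpr hkl.le).image _)
      rintro r ⟨x, ⟨hkx, hxl⟩, rfl⟩
      rcases lt_or_ge x n with hxn | hnx
      · exact le_csSup hMbdd ⟨x, n, hk.trans hkx, hxn, le_rfl, rfl⟩
      · have hxn' : x = n := le_antisymm (hxl.trans hl) hnx
        subst hxn'
        have : pbar p k l x x ≤ 0 := by
          simpa [pathDist_self] using pbar_le_pathDist p k l x x
        exact this.trans h0M
    · -- U ≤ M
      exact le_csSup hMbdd ⟨1, n, le_rfl, h1n, le_rfl, rfl⟩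
    · -- O ≤ M
      have hOne : {r | ∃ x y : ℕ, k ≤ x ∧ x < y ∧ y ≤ l ∧ r = cycDist p k l x y}.Nonempty :=
        ⟨cycDist p k l k l, k, l, le_rfl, hkl, le_rfl, rfl⟩
      apply csSup_le hOne
      rintro r ⟨x, y, hkx, hxy, hyl, rfl⟩
      have h1 : cycDist p k l x y = pbar p k l x y :=
        (pbar_eq_cycDist p hkx hxy.le hyl).symm
      rw [h1]
      exact le_csSup hMbdd ⟨x, y, hk.trans hkx, hxy, hyl.trans hl, rfl⟩
end
end

section
/- Let u, v be vertices of T such that the diameter of T ∪ {(u,v)} is strictly less than diam(T). Then δ_T(σ(u), u) + d(u,v) + δ_T(v, σ(v)) < δ_T(σ(u), σ(v)); in particular σ(u) ≠ σ(v). -/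
noncomputable section

open SimpleGraph

/-- The weight of a walk in a graph whose vertices are embedded in a metric space
via `f`: the sum of the metric distances along its edges. -/
def walkWeight {V : Type*} {X : Type*} [MetricSpace X] (G : SimpleGraph V) (f : V → X)
    {a b : V} (w : G.Walk a b) : ℝ :=
  (w.darts.map (fun e => dist (f e.fst) (f e.snd))).sum

/-- The shortest-path distance `δ_T(x,y)` in the tree `T = (G, f)`: since edge
weights are nonnegative and the path between `x` and `y` in a tree is unique,
this equals the sum of the edge weights along that unique path. -/
def treeDist {V : Type*} {X : Type*} [MetricSpace X] (G : SimpleGraph V) (f : V → X)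
    (x y : V) : ℝ :=
  sInf {r | ∃ w : G.Walk x y, r = walkWeight G f w}

/-- The diameter `diam(T) = max_{x,y} δ_T(x,y)`. -/
def treeDiam {V : Type*} {X : Type*} [MetricSpace X] (G : SimpleGraph V) (f : V → X) : ℝ :=
  sSup {r | ∃ x y : V, r = treeDist G f x y}

/-- The shortest-path distance between `x` and `y` in the augmented graph
`T ∪ {(u,v)}`, where the shortcut edge `(u,v)` has weight `d(f u, f v)`. -/
def augDist {V : Type*} {X : Type*} [MetricSpace X] (G : SimpleGraph V) (f : V → X)
    (u v x y : V) : ℝ :=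
  min (treeDist G f x y)
    (min (treeDist G f x u + dist (f u) (f v) + treeDist G f v y)
         (treeDist G f x v + dist (f u) (f v) + treeDist G f u y))

/-- The diameter of the augmented graph `T ∪ {(u,v)}`. -/
def augDiam {V : Type*} {X : Type*} [MetricSpace X] (G : SimpleGraph V) (f : V → X)
    (u v : V) : ℝ :=
  sSup {r | ∃ x y : V, r = augDist G f u v x y}

/-- A walk is a *longest path* of `T` if it is a path whose weight equals the
diameter of `T`. -/
def IsLongestPath {V : Type*} {X : Type*} [MetricSpace X] (G : SimpleGraph V) (f : V → X)
    {a b : V} (w : G.Walk a b) : Prop :=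
  w.IsPath ∧ walkWeight G f w = treeDiam G f

/-- `P_T`: the set of vertices of `T` that lie on every longest path of `T`. -/
def PT {V : Type*} {X : Type*} [MetricSpace X] (G : SimpleGraph V) (f : V → X) : Set V :=
  {z | ∀ (a b : V) (w : G.Walk a b), IsLongestPath G f w → z ∈ w.support}

namespace ShortcutAux

open SimpleGraph Walk

variable {V : Type*} {X : Type*} [MetricSpace X] {G : SimpleGraph V} {f : V → X}

/-! ### walk weight basics -/

lemma walkWeight_nil {a : V} : walkWeight G f (Walk.nil : G.Walk a a) = 0 := by
  simp [walkWeight]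

lemma walkWeight_cons {a b c : V} (h : G.Adj a b) (p : G.Walk b c) :
    walkWeight G f (Walk.cons h p) = dist (f a) (f b) + walkWeight G f p := by
  simp [walkWeight]

lemma walkWeight_append {a b c : V} (p : G.Walk a b) (q : G.Walk b c) :
    walkWeight G f (p.append q) = walkWeight G f p + walkWeight G f q := by
  simp [walkWeight, Walk.darts_append]

lemma walkWeight_nonneg {a b : V} (p : G.Walk a b) : 0 ≤ walkWeight G f p := by
  apply List.sum_nonneg
  intro x hx
  simp only [List.mem_map] at hx
  obtain ⟨d, -, rfl⟩ := hx
  exact dist_nonneg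

lemma walkWeight_reverse {a b : V} (p : G.Walk a b) :
    walkWeight G f p.reverse = walkWeight G f p := by
  simp only [walkWeight, Walk.darts_reverse, List.map_reverse, List.sum_reverse, List.map_map]
  congr 1
  apply List.map_congr_left
  intro d _
  exact _root_.dist_comm _ _

/-! ### treeDist basics -/

lemma treeDist_le_walkWeight {x y : V} (w : G.Walk x y) :
    treeDist G f x y ≤ walkWeight G f w := by
  have hbdd : BddBelow {r | ∃ w : G.Walk x y, r = walkWeight G f w} := by
    refine ⟨0, ?_⟩
    rintro r ⟨w', rfl⟩
    exact walkWeight_nonneg w'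
  exact csInf_le hbdd ⟨w, rfl⟩

lemma treeDist_nonneg_of_walk {x y : V} (w : G.Walk x y) : 0 ≤ treeDist G f x y := by
  refine le_csInf ⟨walkWeight G f w, w, rfl⟩ ?_
  rintro r ⟨w', rfl⟩
  exact walkWeight_nonneg w'

lemma treeDist_self (x : V) : treeDist G f x x = 0 :=
  le_antisymm (by simpa [walkWeight_nil] using treeDist_le_walkWeight (f := f) (Walk.nil : G.Walk x x))
    (treeDist_nonneg_of_walk Walk.nil)

lemma treeDist_symm (x y : V) : treeDist G f x y = treeDist G f y x := by
  have key : ∀ a b : V, treeDist G f a b ≤ treeDist G f b a := by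
    intro a b
    by_cases hne : Nonempty (G.Walk b a)
    · obtain ⟨w⟩ := hne
      refine le_csInf ⟨walkWeight G f w, w, rfl⟩ ?_
      rintro r ⟨w', rfl⟩
      rw [← walkWeight_reverse w']
      exact treeDist_le_walkWeight w'.reverse
    · have h1 : {r | ∃ w : G.Walk b a, r = walkWeight G f w} = ∅ := by
        ext r; simp only [Set.mem_setOf_eq, Set.mem_empty_iff_false, iff_false]
        rintro ⟨w, -⟩; exact hne ⟨w⟩
      have h2 : {r | ∃ w : G.Walk a b, r = walkWeight G f w} = ∅ := by
        ext r; simp only [Set.mem_setOf_eq, Set.mem_empty_iff_false, iff_false]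
        rintro ⟨w, -⟩; exact hne ⟨w.reverse⟩
      simp [treeDist, h1, h2]
  exact le_antisymm (key x y) (key y x)

lemma dist_le_walkWeight {x y : V} (w : G.Walk x y) :
    dist (f x) (f y) ≤ walkWeight G f w := by
  induction w with
  | nil => simp [walkWeight_nil]
  | @cons a b c h p ih =>
    rw [walkWeight_cons]
    calc dist (f a) (f c) ≤ dist (f a) (f b) + dist (f b) (f c) := dist_triangle _ _ _
    _ ≤ dist (f a) (f b) + walkWeight G f p := by linarith

lemma dist_le_treeDist {x y : V} (w : G.Walk x y) :
    dist (f x) (f y) ≤ treeDist G f x y := by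
  refine le_csInf ⟨walkWeight G f w, w, rfl⟩ ?_
  rintro r ⟨w', rfl⟩
  exact dist_le_walkWeight w'

section DecEq
variable [DecidableEq V]

lemma walkWeight_take_add_drop {x y z : V} (w : G.Walk x y) (h : z ∈ w.support) :
    walkWeight G f (w.takeUntil z h) + walkWeight G f (w.dropUntil z h) = walkWeight G f w := by
  rw [← walkWeight_append, Walk.take_spec]

lemma walkWeight_dropUntil_le {x y z : V} (w : G.Walk x y) (h : z ∈ w.support) :
    walkWeight G f (w.dropUntil z h) ≤ walkWeight G f w := by
  have := walkWeight_take_add_drop (f := f) w h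
  have := walkWeight_nonneg (f := f) (w.takeUntil z h)
  linarith

lemma walkWeight_bypass_le {x y : V} (w : G.Walk x y) :
    walkWeight G f w.bypass ≤ walkWeight G f w := by
  induction w with
  | nil => simp [Walk.bypass]
  | @cons a b c h p ih =>
    simp only [Walk.bypass]
    split_ifs with hs
    · calc walkWeight G f (p.bypass.dropUntil a hs) ≤ walkWeight G f p.bypass :=
            walkWeight_dropUntil_le _ _
      _ ≤ walkWeight G f p := ih
      _ ≤ walkWeight G f (Walk.cons h p) := by
          rw [walkWeight_cons]; have := dist_nonneg (x := f a) (y := f b); linarith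
    · rw [walkWeight_cons, walkWeight_cons]; linarith

end DecEq

variable (hG : G.IsTree)
include hG

lemma path_eq {x y : V} {p q : G.Walk x y} (hp : p.IsPath) (hq : q.IsPath) : p = q := by
  have := hG.IsAcyclic.path_unique ⟨p, hp⟩ ⟨q, hq⟩
  exact congrArg Subtype.val this

lemma treeDist_eq_walkWeight {x y : V} {p : G.Walk x y} (hp : p.IsPath) :
    treeDist G f x y = walkWeight G f p := by
  classical
  refine le_antisymm (treeDist_le_walkWeight p) ?_
  refine le_csInf ⟨walkWeight G f p, p, rfl⟩ ?_
  rintro r ⟨w, rfl⟩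
  have hbp : w.bypass = p := path_eq hG w.bypass_isPath hp
  calc walkWeight G f p = walkWeight G f w.bypass := by rw [hbp]
  _ ≤ walkWeight G f w := walkWeight_bypass_le w

/-- the canonical path between two vertices of a tree -/
noncomputable def tpath (x y : V) : G.Walk x y :=
  ((hG.existsUnique_path x y).exists).choose

lemma tpath_isPath (x y : V) : (tpath hG x y).IsPath :=
  ((hG.existsUnique_path x y).exists).choose_spec

lemma eq_tpath {x y : V} {p : G.Walk x y} (hp : p.IsPath) : p = tpath hG x y :=
  path_eq hG hp (tpath_isPath hG x y)

lemma treeDist_eq_tpath (x y : V) : treeDist G f x y = walkWeight G f (tpath hG x y) :=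
  treeDist_eq_walkWeight hG (tpath_isPath hG x y)

lemma tpath_reverse (x y : V) : (tpath hG x y).reverse = tpath hG y x :=
  eq_tpath hG ((tpath_isPath hG x y).reverse)

lemma treeDist_split [DecidableEq V] {x y z : V} {w : G.Walk x y} (hw : w.IsPath)
    (hz : z ∈ w.support) :
    treeDist G f x y = treeDist G f x z + treeDist G f z y := by
  rw [treeDist_eq_walkWeight hG hw, treeDist_eq_walkWeight hG (hw.takeUntil hz),
    treeDist_eq_walkWeight hG (hw.dropUntil hz), walkWeight_take_add_drop]

lemma treeDist_triangle (x y z : V) :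
    treeDist G f x z ≤ treeDist G f x y + treeDist G f y z := by
  calc treeDist G f x z ≤ walkWeight G f ((tpath hG x y).append (tpath hG y z)) :=
        treeDist_le_walkWeight _
  _ = treeDist G f x y + treeDist G f y z := by
      rw [walkWeight_append, treeDist_eq_tpath hG, treeDist_eq_tpath hG]

omit hG

section Fin
variable [Fintype V]

lemma treeDiam_set_eq :
    {r | ∃ x y : V, r = treeDist G f x y} = Set.range (fun p : V × V => treeDist G f p.1 p.2) := by
  ext r
  constructor
  · rintro ⟨x, y, rfl⟩; exact ⟨(x, y), rfl⟩
  · rintro ⟨⟨x, y⟩, rfl⟩; exact ⟨x, y, rfl⟩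

lemma treeDist_le_treeDiam (x y : V) : treeDist G f x y ≤ treeDiam G f := by
  apply le_csSup
  · rw [treeDiam_set_eq]; exact (Set.finite_range _).bddAbove
  · exact ⟨x, y, rfl⟩

lemma exists_diam_pair [Nonempty V] : ∃ a b : V, treeDist G f a b = treeDiam G f := by
  have hfin : {r | ∃ x y : V, r = treeDist G f x y}.Finite := by
    rw [treeDiam_set_eq]; exact Set.finite_range _
  have hne : {r | ∃ x y : V, r = treeDist G f x y}.Nonempty := by
    obtain ⟨x⟩ := (inferInstance : Nonempty V)
    exact ⟨treeDist G f x x, x, x, rfl⟩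
  obtain ⟨a, b, hab⟩ := hne.csSup_mem hfin
  exact ⟨a, b, hab.symm⟩

lemma augDist_le_augDiam (u v x y : V) : augDist G f u v x y ≤ augDiam G f u v := by
  apply le_csSup
  · have : {r | ∃ x y : V, r = augDist G f u v x y} =
        Set.range (fun p : V × V => augDist G f u v p.1 p.2) := by
      ext r
      constructor
      · rintro ⟨x, y, rfl⟩; exact ⟨(x, y), rfl⟩
      · rintro ⟨⟨x, y⟩, rfl⟩; exact ⟨x, y, rfl⟩
    rw [this]; exact (Set.finite_range _).bddAbove
  · exact ⟨x, y, rfl⟩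

end Fin

/-! ### getVert-based `snd`/`penultimate` machinery -/

lemma getVert_one_append {a b c : V} (p : G.Walk a b) (q : G.Walk b c) (hp : ¬p.Nil) :
    (p.append q).getVert 1 = p.getVert 1 := by
  cases p with
  | nil => exact absurd Walk.Nil.nil hp
  | cons h p' =>
    rw [Walk.cons_append]
    show (p'.append q).getVert 0 = p'.getVert 0
    simp [Walk.getVert_zero]

lemma getVert_one_mem_support {a b : V} (p : G.Walk a b) : p.getVert 1 ∈ p.support := by
  cases p with
  | nil => simp [Walk.getVert]
  | cons h p' =>
    show p'.getVert 0 ∈ _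
    rw [Walk.getVert_zero]
    simp [Walk.support_cons]

lemma getVert_one_ne_start {a b : V} {p : G.Walk a b} (hp : p.IsPath) (hnn : ¬p.Nil) :
    p.getVert 1 ≠ a := by
  cases p with
  | nil => exact absurd Walk.Nil.nil hnn
  | cons h p' =>
    show p'.getVert 0 ≠ a
    rw [Walk.getVert_zero]
    rw [Walk.cons_isPath_iff] at hp
    intro he
    exact hp.2 (he ▸ p'.start_mem_support)

lemma reverse_nil_iff {a b : V} (p : G.Walk a b) : p.reverse.Nil ↔ p.Nil := by
  rw [Walk.nil_iff_length_eq, Walk.nil_iff_length_eq, Walk.length_reverse]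

section DecEq2
variable [DecidableEq V]

lemma getVert_one_takeUntil {x y z : V} (w : G.Walk x y) (h : z ∈ w.support) (hne : z ≠ x) :
    (w.takeUntil z h).getVert 1 = w.getVert 1 := by
  conv_rhs => rw [← Walk.take_spec w h]
  rw [getVert_one_append]
  exact Walk.not_nil_of_ne (fun e => hne e.symm)

lemma penult_dropUntil {x y z : V} (w : G.Walk x y) (h : z ∈ w.support) (hne : z ≠ y) :
    ((w.dropUntil z h).reverse).getVert 1 = w.reverse.getVert 1 := by
  conv_rhs => rw [← Walk.take_spec w h, Walk.reverse_append]
  rw [getVert_one_append]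
  rw [reverse_nil_iff]
  exact Walk.not_nil_of_ne hne

end DecEq2

/-! ### splicing two paths that meet only at their common endpoint -/

lemma start_not_mem_support_tail {t y : V} {q : G.Walk t y} (hq : q.IsPath) :
    t ∉ q.support.tail := by
  cases q with
  | nil => simp
  | cons h p' =>
    rw [Walk.support_cons]
    rw [Walk.cons_isPath_iff] at hq
    simpa using hq.2

lemma splice_isPath {x t y : V} {p : G.Walk x t} {q : G.Walk t y}
    (hp : p.IsPath) (hq : q.IsPath) (hmeet : ∀ r, r ∈ p.support → r ∈ q.support → r = t) :
    (p.append q).IsPath := by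
  rw [Walk.isPath_def, Walk.support_append, List.nodup_append]
  refine ⟨hp.support_nodup, hq.support_nodup.sublist (List.tail_sublist _), ?_⟩
  rintro r hrp _ hrq rfl
  have hrq' : r ∈ q.support := (List.tail_sublist _).mem hrq
  have := hmeet r hrp hrq'
  subst this
  exact start_not_mem_support_tail hq hrq

include hG in
lemma splice_dist {x t y : V} {p : G.Walk x t} {q : G.Walk t y}
    (hp : p.IsPath) (hq : q.IsPath) (hmeet : ∀ r, r ∈ p.support → r ∈ q.support → r = t) :
    treeDist G f x y = treeDist G f x t + treeDist G f t y := by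
  rw [treeDist_eq_walkWeight hG (splice_isPath hp hq hmeet), walkWeight_append,
    treeDist_eq_walkWeight hG hp, treeDist_eq_walkWeight hG hq]

include hG in
/-- The key splicing lemma: if `p` is the path from `x` to `t` and its penultimate
vertex avoids the support of a path `q` from `t` to `y`, then
`δ(x,y) = δ(x,t) + δ(t,y)`. -/
lemma splice_of_penult [DecidableEq V] {x t y : V} {p : G.Walk x t} {q : G.Walk t y}
    (hp : p.IsPath) (hnn : ¬p.Nil) (hq : q.IsPath)
    (hpen : p.reverse.getVert 1 ∉ q.support) :
    treeDist G f x y = treeDist G f x t + treeDist G f t y := by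
  refine splice_dist hG hp hq ?_
  intro r hrp hrq
  by_contra hrt
  -- two distinct paths from r to t
  have p2 : G.Walk r t := p.dropUntil r hrp
  have hp2 : (p.dropUntil r hrp).IsPath := hp.dropUntil hrp
  have hq2 : ((q.takeUntil r hrq).reverse).IsPath := (hq.takeUntil hrq).reverse
  have heq : p.dropUntil r hrp = (q.takeUntil r hrq).reverse := path_eq hG hp2 hq2
  -- the penultimate vertex of `p.dropUntil r` is that of `p`
  have hpen2 : ((p.dropUntil r hrp).reverse).getVert 1 = p.reverse.getVert 1 :=
    penult_dropUntil p hrp hrt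
  have : p.reverse.getVert 1 ∈ q.support := by
    rw [← hpen2, heq, Walk.reverse_reverse]
    exact (q.support_takeUntil_subset hrq) (getVert_one_mem_support _)
  exact hpen this

lemma adj_penult {a t : V} {q : G.Walk a t} (hnn : ¬q.Nil) :
    G.Adj t (q.reverse.getVert 1) :=
  Walk.adj_snd (by rwa [reverse_nil_iff])

include hG in
lemma subpath [DecidableEq V] {a b : V} {w : G.Walk a b} (hw : w.IsPath) {x y : V}
    (hx : x ∈ w.support) (hy : y ∈ w.support) :
    ∃ q : G.Walk x y, q.IsPath ∧ q.support ⊆ w.support := by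
  rw [← Walk.take_spec w hx, Walk.mem_support_append_iff] at hy
  rcases hy with hy | hy
  · have hy' : y ∈ ((w.takeUntil x hx).reverse).support := by
      rw [Walk.support_reverse]; simpa using hy
    refine ⟨((w.takeUntil x hx).reverse).takeUntil y hy', ((hw.takeUntil hx).reverse).takeUntil hy', ?_⟩
    intro r hr
    have hr1 := Walk.support_takeUntil_subset _ hy' hr
    rw [Walk.support_reverse, List.mem_reverse] at hr1
    exact w.support_takeUntil_subset hx hr1
  · refine ⟨(w.dropUntil x hx).takeUntil y hy, (hw.dropUntil hx).takeUntil hy, ?_⟩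
    intro r hr
    exact w.support_dropUntil_subset hx (Walk.support_takeUntil_subset _ hy hr)

include hG in
/-- If `z` is adjacent to the start of a path `w` and lies on `w`, it is the second
vertex of `w`. -/
lemma consec [DecidableEq V] {a b z : V} {w : G.Walk a b} (hw : w.IsPath)
    (hz : z ∈ w.support) (hadj : G.Adj a z) : w.getVert 1 = z := by
  have hne : z ≠ a := hadj.ne'
  have hsingle : (Walk.cons hadj Walk.nil : G.Walk a z).IsPath := by
    rw [Walk.cons_isPath_iff]
    exact ⟨Walk.IsPath.nil, by simpa using hne.symm⟩
  have heq : w.takeUntil z hz = Walk.cons hadj Walk.nil := path_eq hG (hw.takeUntil hz) hsingle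
  have h1 : (w.takeUntil z hz).getVert 1 = w.getVert 1 := getVert_one_takeUntil w hz hne
  rw [heq] at h1
  exact h1.symm

/-! ### PT lemmas -/

lemma PT_mem_support {z a b : V} {w : G.Walk a b} (hz : z ∈ PT G f)
    (hw : IsLongestPath G f w) : z ∈ w.support :=
  hz a b w hw

lemma not_PT {n : V} (hn : n ∉ PT G f) :
    ∃ (a b : V) (w : G.Walk a b), IsLongestPath G f w ∧ n ∉ w.support := by
  simp only [PT, Set.mem_setOf_eq, not_forall] at hn
  obtain ⟨a, b, w, hw, hns⟩ := hn
  exact ⟨a, b, w, hw, hns⟩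

include hG in
lemma pt_segment [DecidableEq V] {t t' : V} (ht : t ∈ PT G f) (ht' : t' ∈ PT G f) :
    ∀ r ∈ (tpath hG t t').support, r ∈ PT G f := by
  intro r hr a b w hw
  obtain ⟨q, hq, hsub⟩ := subpath hG hw.1 (PT_mem_support ht hw) (PT_mem_support ht' hw)
  have : q = tpath hG t t' := eq_tpath hG hq
  exact hsub (this ▸ hr)

include hG in
lemma exists_longest [Fintype V] [Nonempty V] :
    ∃ (a b : V) (w : G.Walk a b), IsLongestPath G f w := by
  obtain ⟨a, b, hab⟩ := exists_diam_pair (G := G) (f := f)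
  exact ⟨a, b, tpath hG a b, tpath_isPath hG a b, by rw [← treeDist_eq_tpath hG, hab]⟩

/-! ### first vertex of `PT` along a walk -/

lemma first_pt {b : V} (hb : b ∈ PT G f) :
    ∀ {a : V} (p : G.Walk a b), p.IsPath → a ∉ PT G f →
    ∃ (t : V) (q : G.Walk a t), t ∈ PT G f ∧ t ∈ p.support ∧ q.IsPath ∧ ¬q.Nil ∧
      q.support ⊆ p.support ∧ q.reverse.getVert 1 ∉ PT G f := by
  intro a p
  induction p with
  | nil => intro _ ha; exact absurd hb ha
  | @cons a c b h p' ih =>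
    intro hp ha
    by_cases hc : c ∈ PT G f
    · have hpath : (Walk.cons h Walk.nil : G.Walk a c).IsPath := by
        rw [Walk.cons_isPath_iff]
        refine ⟨Walk.IsPath.nil, ?_⟩
        simp only [Walk.support_nil, List.mem_singleton]
        exact h.ne
      refine ⟨c, Walk.cons h Walk.nil, hc, ?_, hpath, by simp, ?_, ?_⟩
      · rw [Walk.support_cons]
        exact List.mem_cons_of_mem _ (Walk.start_mem_support _)
      · intro r hr
        simp only [Walk.support_cons, Walk.support_nil, List.mem_cons, List.mem_singleton,
          List.not_mem_nil, or_false] at hr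
        rw [Walk.support_cons]
        rcases hr with hr | hr
        · subst hr; exact List.mem_cons_self
        · subst hr; exact List.mem_cons_of_mem _ (Walk.start_mem_support _)
      · have hrv : ((Walk.cons h Walk.nil : G.Walk a c).reverse).getVert 1 = a := by
          rfl
        rw [hrv]; exact ha
    · rw [Walk.cons_isPath_iff] at hp
      obtain ⟨t, q', ht, htm, hq', hnn, hsub, hpen⟩ := ih hb hp.1 hc
      have hanotin : a ∉ q'.support := fun hmem => hp.2 (hsub hmem)
      have hqpath : (Walk.cons h q').IsPath := by
        rw [Walk.cons_isPath_iff]; exact ⟨hq', hanotin⟩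
      refine ⟨t, Walk.cons h q', ht, ?_, hqpath, by simp, ?_, ?_⟩
      · rw [Walk.support_cons]
        exact List.mem_cons_of_mem _ htm
      · intro r hr
        rw [Walk.support_cons] at hr ⊢
        rcases List.mem_cons.mp hr with hr | hr
        · subst hr; exact List.mem_cons_self
        · exact List.mem_cons_of_mem _ (hsub hr)
      · have : ((Walk.cons h q').reverse).getVert 1 = q'.reverse.getVert 1 := by
          rw [Walk.reverse_cons]
          exact getVert_one_append _ _ (by rwa [reverse_nil_iff])
        rw [this]; exact hpen
/-! ### the σ-structure dichotomy -/

variable {σ : V → V}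

include hG in
lemma sigma_struct [DecidableEq V]
    (hσ_mem : ∀ w : V, σ w ∈ PT G f)
    (hσ_proj : ∀ w : V, ∀ z ∈ PT G f,
      treeDist G f w z = treeDist G f w (σ w) + treeDist G f (σ w) z)
    (u : V) :
    (∀ x, treeDist G f u x = treeDist G f u (σ u) + treeDist G f (σ u) x)
    ∨ ∃ t n : V, t ∈ PT G f ∧ (∀ x, treeDist G f t x = treeDist G f (σ u) x)
        ∧ treeDist G f u t = treeDist G f u (σ u)
        ∧ n ∉ PT G f ∧ G.Adj t n
        ∧ (∀ (y : V) (q : G.Walk t y), q.IsPath → n ∉ q.support →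
            treeDist G f u y = treeDist G f u (σ u) + treeDist G f (σ u) y) := by
  have conn := hG.isConnected
  have walk_exists : ∀ x y : V, Nonempty (G.Walk x y) := fun x y => (conn x y)
  have nn : ∀ x y : V, 0 ≤ treeDist G f x y := fun x y =>
    treeDist_nonneg_of_walk (walk_exists x y).some
  by_cases hu : u ∈ PT G f
  · left
    have h0 : treeDist G f u u = treeDist G f u (σ u) + treeDist G f (σ u) u :=
      hσ_proj u u hu
    rw [treeDist_self] at h0
    have h1 : treeDist G f u (σ u) = 0 := by
      have := nn u (σ u); have := nn (σ u) u; linarith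
    have h2 : treeDist G f (σ u) u = 0 := by
      have := nn u (σ u); have := nn (σ u) u; linarith
    intro x
    have hle : treeDist G f u x ≤ treeDist G f (σ u) x := by
      have := treeDist_triangle (f := f) hG u (σ u) x; linarith
    have hge : treeDist G f (σ u) x ≤ treeDist G f u x := by
      have := treeDist_triangle (f := f) hG (σ u) u x; linarith
    have : treeDist G f u x = treeDist G f (σ u) x := le_antisymm hle hge
    linarith
  · right
    obtain ⟨t, q, ht, htm, hq, hnn, hsub, hpen⟩ :=
      first_pt (hσ_mem u) (tpath hG u (σ u)) (tpath_isPath hG u (σ u)) hu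
    have hsplit : treeDist G f u (σ u) = treeDist G f u t + treeDist G f t (σ u) :=
      treeDist_split hG (tpath_isPath hG u (σ u)) htm
    have hproj_t : treeDist G f u t = treeDist G f u (σ u) + treeDist G f (σ u) t :=
      hσ_proj u t ht
    have h0 : treeDist G f t (σ u) = 0 := by
      have := nn t (σ u); have h := treeDist_symm (G := G) (f := f) t (σ u); linarith
    have h0' : treeDist G f (σ u) t = 0 := by rw [← treeDist_symm]; exact h0
    have hut : treeDist G f u t = treeDist G f u (σ u) := by linarith
    have hteq : ∀ x, treeDist G f t x = treeDist G f (σ u) x := by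
      intro x
      have hle : treeDist G f t x ≤ treeDist G f (σ u) x := by
        have := treeDist_triangle (f := f) hG t (σ u) x; linarith
      have hge : treeDist G f (σ u) x ≤ treeDist G f t x := by
        have := treeDist_triangle (f := f) hG (σ u) t x; linarith
      exact le_antisymm hle hge
    refine ⟨t, q.reverse.getVert 1, ht, hteq, hut, hpen, adj_penult hnn, ?_⟩
    intro y qq hqq hnq
    have := splice_of_penult (f := f) hG hq hnn hqq hnq
    rw [this, hut, hteq y]

include hG in
lemma good_on_longest [DecidableEq V] {u t n : V}
    (ht : t ∈ PT G f) (hteq : ∀ x, treeDist G f t x = treeDist G f (σ u) x)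
    (hsplice : ∀ (y : V) (q : G.Walk t y), q.IsPath → n ∉ q.support →
      treeDist G f u y = treeDist G f u (σ u) + treeDist G f (σ u) y)
    {a b : V} {w : G.Walk a b} (hw : IsLongestPath G f w) (hn : n ∉ w.support) :
    ∀ x ∈ w.support, treeDist G f u x = treeDist G f u (σ u) + treeDist G f (σ u) x := by
  intro x hx
  obtain ⟨q, hq, hsub⟩ := subpath hG hw.1 (PT_mem_support ht hw) hx
  exact hsplice x q hq (fun hmem => hn (hsub hmem))

include hG in
lemma tdist_nonneg (x y : V) : 0 ≤ treeDist G f x y :=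
  treeDist_nonneg_of_walk (hG.isConnected.preconnected x y).some

include hG in
lemma split_at [DecidableEq V] {a b z : V} {W : G.Walk a b} (hW : W.IsPath)
    (hz : z ∈ W.support) :
    ∃ (c d : V) (w1 : G.Walk z c) (w2 : G.Walk z d), w1.IsPath ∧ w2.IsPath ∧
      (∀ r, r ∈ w1.support → r ∈ w2.support → r = z) ∧
      (∀ r ∈ W.support, r ∈ w1.support ∨ r ∈ w2.support) ∧
      w1.support ⊆ W.support ∧ w2.support ⊆ W.support ∧
      walkWeight G f w1 + walkWeight G f w2 = walkWeight G f W ∧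
      treeDist G f c d = walkWeight G f W := by
  refine ⟨a, b, (W.takeUntil z hz).reverse, W.dropUntil z hz,
    (hW.takeUntil hz).reverse, hW.dropUntil hz, ?_, ?_, ?_, ?_, ?_, ?_⟩
  · -- intersection only at z
    intro r hr1 hr2
    rw [Walk.support_reverse, List.mem_reverse] at hr1
    by_contra hrz
    have hnodup : W.support.Nodup := hW.support_nodup
    rw [← Walk.take_spec W hz, Walk.support_append, List.nodup_append] at hnodup
    have hr2' : r ∈ (W.dropUntil z hz).support.tail := by
      cases hdrop : W.dropUntil z hz with
      | nil => rw [hdrop] at hr2; simp at hr2; exact absurd hr2 hrz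
      | cons h p' =>
        rw [hdrop] at hr2
        rw [Walk.support_cons] at hr2
        rcases List.mem_cons.mp hr2 with hr | hr
        · exact absurd hr hrz
        · simpa using hr
    exact hnodup.2.2 r hr1 r hr2' rfl
  · -- cover
    intro r hr
    rw [← Walk.take_spec W hz, Walk.mem_support_append_iff] at hr
    rcases hr with hr | hr
    · left; rw [Walk.support_reverse, List.mem_reverse]; exact hr
    · right; exact hr
  · intro r hr
    rw [Walk.support_reverse, List.mem_reverse] at hr
    exact W.support_takeUntil_subset hz hr
  · exact W.support_dropUntil_subset hz
  · rw [walkWeight_reverse]; exact walkWeight_take_add_drop W hz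
  · exact treeDist_eq_walkWeight hG hW

include hG in
lemma order1 [DecidableEq V] {a b z z' : V} {w : G.Walk a b} (hw : w.IsPath)
    (hz : z ∈ w.support) (hz' : z' ∈ w.support) :
    treeDist G f a z' + treeDist G f z' z = treeDist G f a z ∨
    treeDist G f a z + treeDist G f z z' = treeDist G f a z' := by
  have hz'2 := hz'
  rw [← Walk.take_spec w hz, Walk.mem_support_append_iff] at hz'2
  rcases hz'2 with hmem | hmem
  · left
    exact (treeDist_split hG (hw.takeUntil hz) hmem).symm
  · right
    have s1 : treeDist G f a b = treeDist G f a z + treeDist G f z b :=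
      treeDist_split hG hw hz
    have s2 : treeDist G f a b = treeDist G f a z' + treeDist G f z' b :=
      treeDist_split hG hw hz'
    have s3 : treeDist G f z b = treeDist G f z z' + treeDist G f z' b :=
      treeDist_split hG (hw.dropUntil hz) hmem
    linarith

include hG in
lemma aug_options [Fintype V] {u v x y : V}
    (h : augDiam G f u v < treeDiam G f) (hxy : treeDist G f x y = treeDiam G f) :
    treeDist G f x u + dist (f u) (f v) + treeDist G f v y < treeDiam G f ∨
    treeDist G f x v + dist (f u) (f v) + treeDist G f u y < treeDiam G f := by
  have h1 : augDist G f u v x y < treeDiam G f :=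
    lt_of_le_of_lt (augDist_le_augDiam u v x y) h
  unfold augDist at h1
  rw [hxy] at h1
  rcases min_lt_iff.mp h1 with h2 | h2
  · exact absurd h2 (lt_irrefl _)
  · exact min_lt_iff.mp h2

include hG in
/-- The main computation: a diametral pair whose two endpoints are both "good"
for `u` and for `v` yields the desired inequality. -/
lemma main_comp [Fintype V] [DecidableEq V]
    (hσ_mem : ∀ w : V, σ w ∈ PT G f)
    {u v x y : V}
    (h : augDiam G f u v < treeDiam G f)
    (hxy : treeDist G f x y = treeDiam G f)
    (gux : treeDist G f u x = treeDist G f u (σ u) + treeDist G f (σ u) x)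
    (guy : treeDist G f u y = treeDist G f u (σ u) + treeDist G f (σ u) y)
    (gvx : treeDist G f v x = treeDist G f v (σ v) + treeDist G f (σ v) x)
    (gvy : treeDist G f v y = treeDist G f v (σ v) + treeDist G f (σ v) y) :
    treeDist G f (σ u) u + dist (f u) (f v) + treeDist G f v (σ v) <
      treeDist G f (σ u) (σ v) := by
  set D := treeDiam G f with hD
  have hW : IsLongestPath G f (tpath hG x y) :=
    ⟨tpath_isPath hG x y, by rw [← treeDist_eq_tpath hG, hxy]⟩
  have hsu : σ u ∈ (tpath hG x y).support := PT_mem_support (hσ_mem u) hW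
  have hsv : σ v ∈ (tpath hG x y).support := PT_mem_support (hσ_mem v) hW
  have s1 : treeDist G f x y = treeDist G f x (σ u) + treeDist G f (σ u) y :=
    treeDist_split hG (tpath_isPath hG x y) hsu
  have s2 : treeDist G f x y = treeDist G f x (σ v) + treeDist G f (σ v) y :=
    treeDist_split hG (tpath_isPath hG x y) hsv
  have horder := order1 (f := f) hG (tpath_isPath hG x y) hsu hsv
  have haug := aug_options (f := f) hG h hxy
  -- symmetry facts
  have y1 : treeDist G f u x = treeDist G f x u := treeDist_symm u x
  have y2 : treeDist G f u y = treeDist G f y u := treeDist_symm u y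
  have y3 : treeDist G f v x = treeDist G f x v := treeDist_symm v x
  have y4 : treeDist G f v y = treeDist G f y v := treeDist_symm v y
  have y5 : treeDist G f u (σ u) = treeDist G f (σ u) u := treeDist_symm u (σ u)
  have y6 : treeDist G f v (σ v) = treeDist G f (σ v) v := treeDist_symm v (σ v)
  have y7 : treeDist G f (σ u) (σ v) = treeDist G f (σ v) (σ u) := treeDist_symm _ _
  have y8 : treeDist G f (σ u) y = treeDist G f y (σ u) := treeDist_symm _ _
  have y9 : treeDist G f (σ v) y = treeDist G f y (σ v) := treeDist_symm _ _
  have y10 : treeDist G f (σ u) x = treeDist G f x (σ u) := treeDist_symm _ _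
  have y11 : treeDist G f (σ v) x = treeDist G f x (σ v) := treeDist_symm _ _
  -- nonnegativity facts
  have n1 : 0 ≤ treeDist G f (σ u) u := tdist_nonneg hG _ _
  have n2 : 0 ≤ treeDist G f (σ v) v := tdist_nonneg hG _ _
  have n3 : 0 ≤ treeDist G f (σ u) (σ v) := tdist_nonneg hG _ _
  have n4 : 0 ≤ dist (f u) (f v) := dist_nonneg
  have n5 : 0 ≤ treeDist G f x (σ u) := tdist_nonneg hG _ _
  have n6 : 0 ≤ treeDist G f x (σ v) := tdist_nonneg hG _ _
  have n7 : 0 ≤ treeDist G f (σ u) y := tdist_nonneg hG _ _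
  have n8 : 0 ≤ treeDist G f (σ v) y := tdist_nonneg hG _ _
  rcases haug with hcase | hcase <;> rcases horder with ho | ho <;>
    linarith [treeDist_symm (G := G) (f := f) (σ v) (σ u),
      treeDist_symm (G := G) (f := f) u v]
lemma take_drop_inter [DecidableEq V] {a b z : V} {w : G.Walk a b} (hw : w.IsPath)
    (hz : z ∈ w.support) :
    ∀ r, r ∈ (w.takeUntil z hz).support → r ∈ (w.dropUntil z hz).support → r = z := by
  intro r hr1 hr2
  by_contra hrz
  have hnodup : w.support.Nodup := hw.support_nodup
  rw [← Walk.take_spec w hz, Walk.support_append, List.nodup_append] at hnodup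
  have hr2' : r ∈ (w.dropUntil z hz).support.tail := by
    cases hdrop : w.dropUntil z hz with
    | nil => rw [hdrop] at hr2; simp at hr2; exact absurd hr2 hrz
    | cons h p' =>
      rw [hdrop] at hr2
      rw [Walk.support_cons] at hr2
      rcases List.mem_cons.mp hr2 with hr | hr
      · exact absurd hr hrz
      · simpa using hr
  exact hnodup.2.2 r hr1 r hr2' rfl

include hG in
/-- data about the "bad" side of a longest path split at `s'`. -/
lemma side_data [DecidableEq V] {s' n' A : V} {w1 : G.Walk s' A}
    (hw1 : w1.IsPath) (hadj' : G.Adj s' n') (hn1 : n' ∈ w1.support) :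
    w1.getVert 1 = n' ∧ ¬w1.Nil ∧
    (∀ (y : V) (q : G.Walk s' y), q.IsPath → n' ∉ q.support →
       treeDist G f A y = treeDist G f A s' + treeDist G f s' y) := by
  have hnn : ¬w1.Nil := by
    intro hnil
    rw [Walk.nil_iff_support_eq] at hnil
    rw [hnil] at hn1
    simp at hn1
    exact hadj'.ne' hn1
  have hc : w1.getVert 1 = n' := consec hG hw1 hn1 hadj'
  refine ⟨hc, hnn, ?_⟩
  intro y q hq hnq
  have hpen : (w1.reverse).reverse.getVert 1 ∉ q.support := by
    rw [Walk.reverse_reverse, hc]; exact hnq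
  exact splice_of_penult hG hw1.reverse (by rwa [reverse_nil_iff]) hq hpen

include hG in
/-- if `t ∈ PT` and `t ≠ s'`, then `t` lies on the side of the split avoiding `n'`. -/
lemma center_on_good_side [DecidableEq V] {s' n' A t : V} {w1 : G.Walk s' A}
    (hw1 : w1.IsPath) (hs' : s' ∈ PT G f) (ht : t ∈ PT G f) (hn' : n' ∉ PT G f)
    (hsnd : w1.getVert 1 = n') (hts : t ≠ s') (htw1 : t ∈ w1.support) : False := by
  have htake : w1.takeUntil t htw1 = tpath hG s' t := eq_tpath hG (hw1.takeUntil htw1)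
  have h1 : (w1.takeUntil t htw1).getVert 1 = w1.getVert 1 := getVert_one_takeUntil w1 htw1 hts
  have : n' ∈ (tpath hG s' t).support := by
    rw [← htake, ← hsnd, ← h1]
    exact getVert_one_mem_support _
  exact hn' (pt_segment hG hs' ht _ this)

include hG in
set_option maxHeartbeats 1000000 in
lemma caseC_oriented [Fintype V] [DecidableEq V]
    (hσ_mem : ∀ w : V, σ w ∈ PT G f)
    {u v : V} (h : augDiam G f u v < treeDiam G f)
    {t n t' n' : V}
    (ht : t ∈ PT G f) (hteq : ∀ x, treeDist G f t x = treeDist G f (σ u) x)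
    (hn : n ∉ PT G f) (hadjn : G.Adj t n)
    (hsplice_u : ∀ (y : V) (q : G.Walk t y), q.IsPath → n ∉ q.support →
      treeDist G f u y = treeDist G f u (σ u) + treeDist G f (σ u) y)
    (ht' : t' ∈ PT G f) (hteq' : ∀ x, treeDist G f t' x = treeDist G f (σ v) x)
    (hn' : n' ∉ PT G f) (hadjn' : G.Adj t' n')
    (hsplice_v : ∀ (y : V) (q : G.Walk t' y), q.IsPath → n' ∉ q.support →
      treeDist G f v y = treeDist G f v (σ v) + treeDist G f (σ v) y)
    {au bu : V} {Wu : G.Walk au bu} (hWu : IsLongestPath G f Wu) (hnWu : n ∉ Wu.support)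
    {av bv : V} {Wv : G.Walk av bv} (hWv : IsLongestPath G f Wv) (hn'Wv : n' ∉ Wv.support)
    {A₁ B₁ : V} {w1 : G.Walk t' A₁} {w2 : G.Walk t' B₁}
    (hw1 : w1.IsPath) (hw2 : w2.IsPath)
    (hint1 : ∀ r, r ∈ w1.support → r ∈ w2.support → r = t')
    (hcov1 : ∀ r ∈ Wu.support, r ∈ w1.support ∨ r ∈ w2.support)
    (hsub11 : w1.support ⊆ Wu.support) (hsub12 : w2.support ⊆ Wu.support)
    (hww1 : walkWeight G f w1 + walkWeight G f w2 = walkWeight G f Wu)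
    (hAB1 : treeDist G f A₁ B₁ = treeDiam G f)
    (hn'w1 : n' ∈ w1.support)
    {A₂ B₂ : V} {w1' : G.Walk t A₂} {w2' : G.Walk t B₂}
    (hw1' : w1'.IsPath) (hw2' : w2'.IsPath)
    (hint2 : ∀ r, r ∈ w1'.support → r ∈ w2'.support → r = t)
    (hcov2 : ∀ r ∈ Wv.support, r ∈ w1'.support ∨ r ∈ w2'.support)
    (hsub21 : w1'.support ⊆ Wv.support) (hsub22 : w2'.support ⊆ Wv.support)
    (hww2 : walkWeight G f w1' + walkWeight G f w2' = walkWeight G f Wv)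
    (hAB2 : treeDist G f A₂ B₂ = treeDiam G f)
    (hnw1' : n ∈ w1'.support) :
    treeDist G f (σ u) u + dist (f u) (f v) + treeDist G f v (σ v) <
      treeDist G f (σ u) (σ v) := by
  have hDu : treeDist G f t' A₁ + treeDist G f t' B₁ = treeDiam G f := by
    rw [treeDist_eq_walkWeight hG hw1, treeDist_eq_walkWeight hG hw2, hww1, hWu.2]
  have hDv : treeDist G f t A₂ + treeDist G f t B₂ = treeDiam G f := by
    rw [treeDist_eq_walkWeight hG hw1', treeDist_eq_walkWeight hG hw2', hww2, hWv.2]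
  obtain ⟨hsnd1, hnn1, hcross1⟩ := side_data (f := f) hG hw1 hadjn' hn'w1
  obtain ⟨hsnd2, hnn2, hcross2⟩ := side_data (f := f) hG hw1' hadjn hnw1'
  have hn'w2 : n' ∉ w2.support := fun hmem => hn' ((hint1 n' hn'w1 hmem) ▸ ht')
  have hnw2' : n ∉ w2'.support := fun hmem => hn ((hint2 n hnw1' hmem) ▸ ht)
  have hgoodWu := good_on_longest (f := f) hG ht hteq hsplice_u hWu hnWu
  have hgoodWv := good_on_longest (f := f) hG ht' hteq' hsplice_v hWv hn'Wv
  have hB1 : B₁ ∈ Wu.support := hsub12 (Walk.end_mem_support w2)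
  have hA1 : A₁ ∈ Wu.support := hsub11 (Walk.end_mem_support w1)
  have hB2 : B₂ ∈ Wv.support := hsub22 (Walk.end_mem_support w2')
  have hA2 : A₂ ∈ Wv.support := hsub21 (Walk.end_mem_support w1')
  -- goodness facts
  have gA1u : treeDist G f u A₁ = treeDist G f u (σ u) + treeDist G f (σ u) A₁ :=
    hgoodWu A₁ hA1
  have gB1u : treeDist G f u B₁ = treeDist G f u (σ u) + treeDist G f (σ u) B₁ :=
    hgoodWu B₁ hB1
  have gA2v : treeDist G f v A₂ = treeDist G f v (σ v) + treeDist G f (σ v) A₂ :=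
    hgoodWv A₂ hA2
  have gB2v : treeDist G f v B₂ = treeDist G f v (σ v) + treeDist G f (σ v) B₂ :=
    hgoodWv B₂ hB2
  have gB1v : treeDist G f v B₁ = treeDist G f v (σ v) + treeDist G f (σ v) B₁ :=
    hsplice_v B₁ w2 hw2 hn'w2
  have gB2u : treeDist G f u B₂ = treeDist G f u (σ u) + treeDist G f (σ u) B₂ :=
    hsplice_u B₂ w2' hw2' hnw2'
  -- symmetry and conversion facts
  have cA1 : treeDist G f t A₁ = treeDist G f (σ u) A₁ := hteq A₁
  have cB1 : treeDist G f t B₁ = treeDist G f (σ u) B₁ := hteq B₁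
  have cA2 : treeDist G f t A₂ = treeDist G f (σ u) A₂ := hteq A₂
  have cB2 : treeDist G f t B₂ = treeDist G f (σ u) B₂ := hteq B₂
  have cu : treeDist G f t u = treeDist G f (σ u) u := hteq u
  have cv : treeDist G f t v = treeDist G f (σ u) v := hteq v
  have c'A1 : treeDist G f t' A₁ = treeDist G f (σ v) A₁ := hteq' A₁
  have c'B1 : treeDist G f t' B₁ = treeDist G f (σ v) B₁ := hteq' B₁
  have c'A2 : treeDist G f t' A₂ = treeDist G f (σ v) A₂ := hteq' A₂
  have c'B2 : treeDist G f t' B₂ = treeDist G f (σ v) B₂ := hteq' B₂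
  have c'u : treeDist G f t' u = treeDist G f (σ v) u := hteq' u
  have c'v : treeDist G f t' v = treeDist G f (σ v) v := hteq' v
  have y1 : treeDist G f u (σ u) = treeDist G f (σ u) u := treeDist_symm _ _
  have y2 : treeDist G f v (σ v) = treeDist G f (σ v) v := treeDist_symm _ _
  have y3 : treeDist G f u A₁ = treeDist G f A₁ u := treeDist_symm _ _
  have y4 : treeDist G f u B₁ = treeDist G f B₁ u := treeDist_symm _ _
  have y5 : treeDist G f v A₂ = treeDist G f A₂ v := treeDist_symm _ _
  have y6 : treeDist G f v B₂ = treeDist G f B₂ v := treeDist_symm _ _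
  have y7 : treeDist G f v B₁ = treeDist G f B₁ v := treeDist_symm _ _
  have y8 : treeDist G f u B₂ = treeDist G f B₂ u := treeDist_symm _ _
  have y9 : treeDist G f v A₁ = treeDist G f A₁ v := treeDist_symm _ _
  have y10 : treeDist G f u A₂ = treeDist G f A₂ u := treeDist_symm _ _
  have y11 : treeDist G f t A₁ = treeDist G f A₁ t := treeDist_symm _ _
  have y12 : treeDist G f t A₂ = treeDist G f A₂ t := treeDist_symm _ _
  have y13 : treeDist G f t B₁ = treeDist G f B₁ t := treeDist_symm _ _
  have y14 : treeDist G f t' A₁ = treeDist G f A₁ t' := treeDist_symm _ _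
  have y15 : treeDist G f t' A₂ = treeDist G f A₂ t' := treeDist_symm _ _
  have y16 : treeDist G f t t' = treeDist G f t' t := treeDist_symm _ _
  -- nonnegativity
  have nn1 : 0 ≤ treeDist G f u (σ u) := tdist_nonneg hG _ _
  have nn2 : 0 ≤ treeDist G f v (σ v) := tdist_nonneg hG _ _
  have nn3 : 0 ≤ dist (f u) (f v) := dist_nonneg
  have nn4 : 0 ≤ treeDist G f t t' := tdist_nonneg hG _ _
  -- the goal in t/t' language
  have hgoal_conv : treeDist G f t t' = treeDist G f (σ u) (σ v) := by
    have e1 : treeDist G f t t' = treeDist G f (σ u) t' := hteq t'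
    have e2 : treeDist G f (σ u) t' = treeDist G f t' (σ u) := treeDist_symm _ _
    have e3 : treeDist G f t' (σ u) = treeDist G f (σ v) (σ u) := hteq' (σ u)
    have e4 : treeDist G f (σ v) (σ u) = treeDist G f (σ u) (σ v) := treeDist_symm _ _
    linarith
  by_cases htt : t = t'
  · -- the two projections coincide as vertices: derive a contradiction
    subst htt
    have X1 : treeDist G f A₁ B₂ = treeDist G f A₁ t + treeDist G f t B₂ :=
      hcross1 B₂ w2' hw2' (fun hm => hn'Wv (hsub22 hm))
    have X2 : treeDist G f A₂ B₁ = treeDist G f A₂ t + treeDist G f t B₁ :=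
      hcross2 B₁ w2 hw2 (fun hm => hnWu (hsub12 hm))
    have hb1 : treeDist G f A₁ B₂ ≤ treeDiam G f := treeDist_le_treeDiam _ _
    have hb2 : treeDist G f A₂ B₁ ≤ treeDiam G f := treeDist_le_treeDiam _ _
    have tri1 : treeDist G f t A₂ ≤ treeDist G f t u + treeDist G f u A₂ :=
      treeDist_triangle (f := f) hG _ _ _
    have tri2 : treeDist G f t A₁ ≤ treeDist G f t v + treeDist G f v A₁ :=
      treeDist_triangle (f := f) hG _ _ _
    have hA2B1D : treeDist G f A₂ B₁ = treeDiam G f := by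
      rw [X2]; linarith
    have aug1 := aug_options (f := f) hG h hAB1
    have aug2 := aug_options (f := f) hG h hA2B1D
    rcases aug1 with h1 | h1
    · linarith
    · rcases aug2 with h2 | h2 <;> linarith
  · -- the projections differ
    have htw2 : t ∈ w2.support := by
      rcases hcov1 t (PT_mem_support ht hWu) with hmem | hmem
      · exact absurd (center_on_good_side (f := f) hG hw1 ht' ht hn' hsnd1 htt hmem) id
      · exact hmem
    have ht'w2' : t' ∈ w2'.support := by
      rcases hcov2 t' (PT_mem_support ht' hWv) with hmem | hmem
      · exact absurd (center_on_good_side (f := f) hG hw1' ht ht' hn hsnd2 (Ne.symm htt) hmem) id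
      · exact hmem
    have s1 : treeDist G f t' B₁ = treeDist G f t' t + treeDist G f t B₁ :=
      treeDist_split hG hw2 htw2
    have s2 : treeDist G f t B₂ = treeDist G f t t' + treeDist G f t' B₂ :=
      treeDist_split hG hw2' ht'w2'
    have hnseg : n ∉ (tpath hG t t').support := fun hm => hn (pt_segment hG ht ht' _ hm)
    have hx3a : treeDist G f A₂ t' = treeDist G f A₂ t + treeDist G f t t' :=
      hcross2 t' (tpath hG t t') (tpath_isPath hG t t') hnseg
    obtain ⟨qA, hqA, hqAsub⟩ := subpath hG hWv.1 (PT_mem_support ht' hWv) hA2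
    have hx3 : treeDist G f A₁ A₂ = treeDist G f A₁ t' + treeDist G f t' A₂ :=
      hcross1 A₂ qA hqA (fun hm => hn'Wv (hqAsub hm))
    -- the key splice: δ(B₁,B₂) = δ(B₁,t) + δ(t,B₂)
    have KEY : treeDist G f B₁ B₂ = treeDist G f B₁ t + treeDist G f t B₂ := by
      by_cases hSBnil : (w2.dropUntil t htw2).Nil
      · have hteq2 : t = B₁ := hSBnil.eq
        subst hteq2
        rw [treeDist_self]
        ring
      · have hz₁adj : G.Adj t ((w2.dropUntil t htw2).getVert 1) :=
          Walk.adj_snd hSBnil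
        have hz1q : (w2.dropUntil t htw2).getVert 1 ∉ w2'.support := by
          intro hz
          have h1 : w2'.getVert 1 = (w2.dropUntil t htw2).getVert 1 :=
            consec hG hw2' hz hz₁adj
          have htake : w2'.takeUntil t' ht'w2' = tpath hG t t' :=
            eq_tpath hG (hw2'.takeUntil ht'w2')
          have h2 : (w2'.takeUntil t' ht'w2').getVert 1 = w2'.getVert 1 :=
            getVert_one_takeUntil _ _ (Ne.symm htt)
          have hz3 : (w2.dropUntil t htw2).getVert 1 ∈ (tpath hG t t').support := by
            rw [← htake, ← h1, ← h2]
            exact getVert_one_mem_support _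
          have htake2 : (w2.takeUntil t htw2).reverse = tpath hG t t' :=
            eq_tpath hG ((hw2.takeUntil htw2).reverse)
          have hz4 : (w2.dropUntil t htw2).getVert 1 ∈ (w2.takeUntil t htw2).support := by
            rw [← htake2, Walk.support_reverse, List.mem_reverse] at hz3
            exact hz3
          have hz5 : (w2.dropUntil t htw2).getVert 1 ∈ (w2.dropUntil t htw2).support :=
            getVert_one_mem_support _
          have : (w2.dropUntil t htw2).getVert 1 = t :=
            take_drop_inter hw2 htw2 _ hz4 hz5
          exact (getVert_one_ne_start (hw2.dropUntil htw2) hSBnil) this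
        have hpen : ((w2.dropUntil t htw2).reverse).reverse.getVert 1 ∉ w2'.support := by
          rw [Walk.reverse_reverse]; exact hz1q
        exact splice_of_penult hG (hw2.dropUntil htw2).reverse
          (by rwa [reverse_nil_iff]) hw2' hpen
    have hbAA : treeDist G f A₁ A₂ ≤ treeDiam G f := treeDist_le_treeDiam _ _
    have hbBB : treeDist G f B₁ B₂ ≤ treeDiam G f := treeDist_le_treeDiam _ _
    have hB1B2D : treeDist G f B₁ B₂ = treeDiam G f := by
      rw [KEY]; linarith
    have aug := aug_options (f := f) hG h hB1B2D
    rcases aug with h1 | h1 <;> linarith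
include hG in
lemma longest_diam {a b : V} {w : G.Walk a b} (hw : IsLongestPath G f w) :
    treeDist G f a b = treeDiam G f :=
  (treeDist_eq_walkWeight hG hw.1).trans hw.2

include hG in
lemma caseC [Fintype V] [DecidableEq V]
    (hσ_mem : ∀ w : V, σ w ∈ PT G f)
    {u v : V} (h : augDiam G f u v < treeDiam G f)
    {t n t' n' : V}
    (ht : t ∈ PT G f) (hteq : ∀ x, treeDist G f t x = treeDist G f (σ u) x)
    (hn : n ∉ PT G f) (hadjn : G.Adj t n)
    (hsplice_u : ∀ (y : V) (q : G.Walk t y), q.IsPath → n ∉ q.support →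
      treeDist G f u y = treeDist G f u (σ u) + treeDist G f (σ u) y)
    (ht' : t' ∈ PT G f) (hteq' : ∀ x, treeDist G f t' x = treeDist G f (σ v) x)
    (hn' : n' ∉ PT G f) (hadjn' : G.Adj t' n')
    (hsplice_v : ∀ (y : V) (q : G.Walk t' y), q.IsPath → n' ∉ q.support →
      treeDist G f v y = treeDist G f v (σ v) + treeDist G f (σ v) y)
    {au bu : V} {Wu : G.Walk au bu} (hWu : IsLongestPath G f Wu) (hnWu : n ∉ Wu.support)
    {av bv : V} {Wv : G.Walk av bv} (hWv : IsLongestPath G f Wv) (hn'Wv : n' ∉ Wv.support)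
    (hn'u : n' ∈ Wu.support) (hnv : n ∈ Wv.support) :
    treeDist G f (σ u) u + dist (f u) (f v) + treeDist G f v (σ v) <
      treeDist G f (σ u) (σ v) := by
  have ht'Wu : t' ∈ Wu.support := PT_mem_support ht' hWu
  have htWv : t ∈ Wv.support := PT_mem_support ht hWv
  obtain ⟨c1, d1, p1, p2, hp1, hp2, hi1, hc1, hs11, hs12, hwt1, hcd1⟩ :=
    split_at (f := f) hG hWu.1 ht'Wu
  obtain ⟨c2, d2, p1', p2', hp1', hp2', hi2, hc2, hs21, hs22, hwt2, hcd2⟩ :=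
    split_at (f := f) hG hWv.1 htWv
  have hcd1D : treeDist G f c1 d1 = treeDiam G f := by rw [hcd1, hWu.2]
  have hcd2D : treeDist G f c2 d2 = treeDiam G f := by rw [hcd2, hWv.2]
  have hcd1D' : treeDist G f d1 c1 = treeDiam G f := by rw [treeDist_symm]; exact hcd1D
  have hcd2D' : treeDist G f d2 c2 = treeDiam G f := by rw [treeDist_symm]; exact hcd2D
  rcases hc1 n' hn'u with hA | hA <;> rcases hc2 n hnv with hB | hB
  · exact caseC_oriented hG hσ_mem h ht hteq hn hadjn hsplice_u ht' hteq' hn' hadjn'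
      hsplice_v hWu hnWu hWv hn'Wv hp1 hp2 hi1 hc1 hs11 hs12 hwt1 hcd1D hA
      hp1' hp2' hi2 hc2 hs21 hs22 hwt2 hcd2D hB
  · exact caseC_oriented hG hσ_mem h ht hteq hn hadjn hsplice_u ht' hteq' hn' hadjn'
      hsplice_v hWu hnWu hWv hn'Wv hp1 hp2 hi1 hc1 hs11 hs12 hwt1 hcd1D hA
      hp2' hp1' (fun r h1 h2 => hi2 r h2 h1) (fun r hr => (hc2 r hr).symm)
      hs22 hs21 (by linarith) hcd2D' hB
  · exact caseC_oriented hG hσ_mem h ht hteq hn hadjn hsplice_u ht' hteq' hn' hadjn'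
      hsplice_v hWu hnWu hWv hn'Wv hp2 hp1 (fun r h1 h2 => hi1 r h2 h1)
      (fun r hr => (hc1 r hr).symm) hs12 hs11 (by linarith) hcd1D' hA
      hp1' hp2' hi2 hc2 hs21 hs22 hwt2 hcd2D hB
  · exact caseC_oriented hG hσ_mem h ht hteq hn hadjn hsplice_u ht' hteq' hn' hadjn'
      hsplice_v hWu hnWu hWv hn'Wv hp2 hp1 (fun r h1 h2 => hi1 r h2 h1)
      (fun r hr => (hc1 r hr).symm) hs12 hs11 (by linarith) hcd1D' hA
      hp2' hp1' (fun r h1 h2 => hi2 r h2 h1) (fun r hr => (hc2 r hr).symm)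
      hs22 hs21 (by linarith) hcd2D' hB
include hG in
lemma main_ineq [Fintype V]
    (hσ_mem : ∀ w : V, σ w ∈ PT G f)
    (hσ_proj : ∀ w : V, ∀ z ∈ PT G f,
      treeDist G f w z = treeDist G f w (σ w) + treeDist G f (σ w) z)
    (u v : V) (h : augDiam G f u v < treeDiam G f) :
    treeDist G f (σ u) u + dist (f u) (f v) + treeDist G f v (σ v) <
      treeDist G f (σ u) (σ v) := by
  classical
  -- V is nonempty
  have hne : Nonempty V := by
    by_contra h0
    rw [not_nonempty_iff] at h0
    have e1 : {r | ∃ x y : V, r = treeDist G f x y} = ∅ := by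
      ext r; simp only [Set.mem_setOf_eq, Set.mem_empty_iff_false, iff_false]
      rintro ⟨x, -⟩; exact h0.elim x
    have e2 : {r | ∃ x y : V, r = augDist G f u v x y} = ∅ := h0.elim u
    exact absurd h (by rw [treeDiam, augDiam, e1, e2]; exact lt_irrefl _)
  rcases sigma_struct (f := f) hG hσ_mem hσ_proj u with hu |
    ⟨t, n, ht, hteq, hut, hn, hadjn, hsplice_u⟩
  · rcases sigma_struct (f := f) hG hσ_mem hσ_proj v with hv |
      ⟨t', n', ht', hteq', hvt, hn', hadjn', hsplice_v⟩
    · obtain ⟨a, b, w, hw⟩ := exists_longest (f := f) hG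
      exact main_comp hG hσ_mem h (longest_diam hG hw) (hu a) (hu b) (hv a) (hv b)
    · obtain ⟨a, b, w, hw, hnw⟩ := not_PT (f := f) hn'
      have hgood := good_on_longest (f := f) hG ht' hteq' hsplice_v hw hnw
      exact main_comp hG hσ_mem h (longest_diam hG hw) (hu a) (hu b)
        (hgood a (Walk.start_mem_support w)) (hgood b (Walk.end_mem_support w))
  · rcases sigma_struct (f := f) hG hσ_mem hσ_proj v with hv |
      ⟨t', n', ht', hteq', hvt, hn', hadjn', hsplice_v⟩
    · obtain ⟨a, b, w, hw, hnw⟩ := not_PT (f := f) hn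
      have hgood := good_on_longest (f := f) hG ht hteq hsplice_u hw hnw
      exact main_comp hG hσ_mem h (longest_diam hG hw)
        (hgood a (Walk.start_mem_support w)) (hgood b (Walk.end_mem_support w))
        (hv a) (hv b)
    · obtain ⟨au, bu, Wu, hWu, hnWu⟩ := not_PT (f := f) hn
      obtain ⟨av, bv, Wv, hWv, hn'Wv⟩ := not_PT (f := f) hn'
      have hgu := good_on_longest (f := f) hG ht hteq hsplice_u hWu hnWu
      have hgv := good_on_longest (f := f) hG ht' hteq' hsplice_v hWv hn'Wv
      by_cases hc1 : n' ∈ Wu.support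
      · by_cases hc2 : n ∈ Wv.support
        · exact caseC hG hσ_mem h ht hteq hn hadjn hsplice_u ht' hteq' hn' hadjn'
            hsplice_v hWu hnWu hWv hn'Wv hc1 hc2
        · have hgu' := good_on_longest (f := f) hG ht hteq hsplice_u hWv hc2
          exact main_comp hG hσ_mem h (longest_diam hG hWv)
            (hgu' av (Walk.start_mem_support Wv)) (hgu' bv (Walk.end_mem_support Wv))
            (hgv av (Walk.start_mem_support Wv)) (hgv bv (Walk.end_mem_support Wv))
      · have hgv' := good_on_longest (f := f) hG ht' hteq' hsplice_v hWu hc1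
        exact main_comp hG hσ_mem h (longest_diam hG hWu)
          (hgu au (Walk.start_mem_support Wu)) (hgu bu (Walk.end_mem_support Wu))
          (hgv' au (Walk.start_mem_support Wu)) (hgv' bu (Walk.end_mem_support Wu))

end ShortcutAux

/-- Let `σ` map each vertex `w` to the unique vertex of `P_T`
nearest to `w` (equivalently, the vertex of `P_T` through which every path in `T`
from `w` to a vertex of `P_T` passes, so that `δ_T(w,z) = δ_T(w,σ w) + δ_T(σ w, z)`
for all `z ∈ P_T`). If `u, v` are vertices such that the diameter of `T ∪ {(u,v)}`
is strictly less than `diam(T)`, then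
`δ_T(σ u, u) + d(u,v) + δ_T(v, σ v) < δ_T(σ u, σ v)`; in particular `σ u ≠ σ v`. -/
theorem shortcut_and_projection_inequality {V : Type*} [Fintype V] {X : Type*}
    [MetricSpace X] (G : SimpleGraph V) (hG : G.IsTree) (f : V → X)
    (σ : V → V)
    (hσ_mem : ∀ w : V, σ w ∈ PT G f)
    (hσ_proj : ∀ w : V, ∀ z ∈ PT G f,
      treeDist G f w z = treeDist G f w (σ w) + treeDist G f (σ w) z)
    (u v : V) (h : augDiam G f u v < treeDiam G f) :
    treeDist G f (σ u) u + dist (f u) (f v) + treeDist G f v (σ v) <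
        treeDist G f (σ u) (σ v) ∧
      σ u ≠ σ v := by
  have hmain := ShortcutAux.main_ineq hG hσ_mem hσ_proj u v h
  refine ⟨hmain, ?_⟩
  intro heq
  rw [heq, ShortcutAux.treeDist_self] at hmain
  have n1 : 0 ≤ treeDist G f (σ v) u := ShortcutAux.tdist_nonneg hG _ _
  have n2 : 0 ≤ treeDist G f v (σ v) := ShortcutAux.tdist_nonneg hG _ _
  have n3 : (0:ℝ) ≤ dist (f u) (f v) := dist_nonneg
  linarith
end
end

section
/- Let u, v be vertices of T satisfying δ_T(σ(u), u) + d(u,v) + δ_T(v, σ(v)) < δ_T(σ(u), σ(v)). Then for all vertices s, t of T with σ(s) = σ(t) = σ(u), the shortest-path distance between s and t in T ∪ {(u,v)} equals δ_T(s,t), and it also equals the shortest-path distance between s and t in T ∪ {(σ(u), σ(v))}. -/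
noncomputable section

open SimpleGraph

section AuxLemmas

variable {V : Type*} {X : Type*} [MetricSpace X] (G : SimpleGraph V) (f : V → X)

lemma walkWeight_nonneg {a b : V} (w : G.Walk a b) : 0 ≤ walkWeight G f w := by
  apply List.sum_nonneg
  intro r hr
  simp only [List.mem_map] at hr
  obtain ⟨d, -, rfl⟩ := hr
  exact dist_nonneg

lemma walkWeight_reverse {a b : V} (w : G.Walk a b) :
    walkWeight G f w.reverse = walkWeight G f w := by
  unfold walkWeight
  rw [SimpleGraph.Walk.darts_reverse, List.map_reverse, List.sum_reverse, List.map_map]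
  have h : ((fun e : G.Dart => dist (f e.fst) (f e.snd)) ∘ Dart.symm)
      = fun e : G.Dart => dist (f e.fst) (f e.snd) := by
    funext d
    simp only [Function.comp_apply, Dart.symm_toProd, Prod.fst_swap, Prod.snd_swap]
    exact dist_comm _ _
  rw [h]

lemma walkWeight_append {a b c : V} (w1 : G.Walk a b) (w2 : G.Walk b c) :
    walkWeight G f (w1.append w2) = walkWeight G f w1 + walkWeight G f w2 := by
  unfold walkWeight
  rw [SimpleGraph.Walk.darts_append, List.map_append, List.sum_append]

lemma treeDist_bddBelow (x y : V) :
    BddBelow {r | ∃ w : G.Walk x y, r = walkWeight G f w} :=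
  ⟨0, by rintro r ⟨w, rfl⟩; exact walkWeight_nonneg G f w⟩

lemma treeDist_le (x y : V) (w : G.Walk x y) : treeDist G f x y ≤ walkWeight G f w :=
  csInf_le (treeDist_bddBelow G f x y) ⟨w, rfl⟩

lemma treeDist_nonneg (x y : V) : 0 ≤ treeDist G f x y :=
  Real.sInf_nonneg (by rintro r ⟨w, rfl⟩; exact walkWeight_nonneg G f w)

lemma treeDist_comm (x y : V) : treeDist G f x y = treeDist G f y x := by
  unfold treeDist
  congr 1
  ext r
  constructor
  · rintro ⟨w, rfl⟩; exact ⟨w.reverse, (walkWeight_reverse G f w).symm⟩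
  · rintro ⟨w, rfl⟩; exact ⟨w.reverse, (walkWeight_reverse G f w).symm⟩

lemma treeDist_triangle (hc : G.Connected) (x y z : V) :
    treeDist G f x z ≤ treeDist G f x y + treeDist G f y z := by
  obtain ⟨wa⟩ := hc x y
  obtain ⟨wb⟩ := hc y z
  have hA : {r | ∃ w : G.Walk x y, r = walkWeight G f w}.Nonempty := ⟨_, wa, rfl⟩
  have hB : {r | ∃ w : G.Walk y z, r = walkWeight G f w}.Nonempty := ⟨_, wb, rfl⟩
  rw [show treeDist G f x y + treeDist G f y z = treeDist G f x y + treeDist G f y z from rfl]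
  have h1 : treeDist G f x z - treeDist G f y z ≤ treeDist G f x y := by
    apply le_csInf hA
    rintro r ⟨w1, rfl⟩
    have h2 : treeDist G f x z - walkWeight G f w1 ≤ treeDist G f y z := by
      apply le_csInf hB
      rintro r2 ⟨w2, rfl⟩
      have := treeDist_le G f x z (w1.append w2)
      rw [walkWeight_append] at this
      linarith
    linarith
  linarith

end AuxLemmas

/-- Let `σ` map each vertex `w` to the unique vertex of `P_T`
nearest to `w` (so that `δ_T(w,z) = δ_T(w,σ w) + δ_T(σ w, z)` for all `z ∈ P_T`).
Let `u, v` be vertices satisfying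
`δ_T(σ u, u) + d(u,v) + δ_T(v, σ v) < δ_T(σ u, σ v)`. Then for all vertices `s, t`
with `σ s = σ t = σ u`, the shortest-path distance between `s` and `t` in
`T ∪ {(u,v)}` equals `δ_T(s,t)`, and it also equals the shortest-path distance
between `s` and `t` in `T ∪ {(σ u, σ v)}`. -/

theorem same_subtree_shortcut_useless {V : Type*} [Fintype V] {X : Type*}
    [MetricSpace X] (G : SimpleGraph V) (hG : G.IsTree) (f : V → X)
    (σ : V → V)
    (hσ_mem : ∀ w : V, σ w ∈ PT G f)
    (hσ_proj : ∀ w : V, ∀ z ∈ PT G f,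
      treeDist G f w z = treeDist G f w (σ w) + treeDist G f (σ w) z)
    (u v : V)
    (huv : treeDist G f (σ u) u + dist (f u) (f v) + treeDist G f v (σ v) <
      treeDist G f (σ u) (σ v)) :
    ∀ s t : V, σ s = σ u → σ t = σ u →
      augDist G f u v s t = treeDist G f s t ∧
      augDist G f (σ u) (σ v) s t = treeDist G f s t := by
  intro s t hs ht
  have hc := hG.isConnected
  set p := σ u with hp
  set q := σ v with hq
  have hsq : treeDist G f s q = treeDist G f s p + treeDist G f p q := by
    have h := hσ_proj s q (hσ_mem v); rwa [hs] at h
  have htq : treeDist G f t q = treeDist G f t p + treeDist G f p q := by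
    have h := hσ_proj t q (hσ_mem v); rwa [ht] at h
  have t1 : treeDist G f s p ≤ treeDist G f s u + treeDist G f u p :=
    treeDist_triangle G f hc s u p
  have t2 : treeDist G f t q ≤ treeDist G f t v + treeDist G f v q :=
    treeDist_triangle G f hc t v q
  have t3 : treeDist G f s q ≤ treeDist G f s v + treeDist G f v q :=
    treeDist_triangle G f hc s v q
  have t4 : treeDist G f t p ≤ treeDist G f t u + treeDist G f u p :=
    treeDist_triangle G f hc t u p
  have t5 : treeDist G f s t ≤ treeDist G f s p + treeDist G f p t :=
    treeDist_triangle G f hc s p t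
  have c1 : treeDist G f v t = treeDist G f t v := treeDist_comm G f v t
  have c2 : treeDist G f u t = treeDist G f t u := treeDist_comm G f u t
  have c3 : treeDist G f p t = treeDist G f t p := treeDist_comm G f p t
  have c4 : treeDist G f u p = treeDist G f p u := treeDist_comm G f u p
  have c5 : treeDist G f q t = treeDist G f t q := treeDist_comm G f q t
  have d1 : (0:ℝ) ≤ dist (f u) (f v) := dist_nonneg
  have d2 : (0:ℝ) ≤ dist (f p) (f q) := dist_nonneg
  have npq : 0 ≤ treeDist G f p q := treeDist_nonneg G f p q
  constructor
  · rw [augDist, min_eq_left]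
    exact le_min (by linarith) (by linarith)
  · rw [augDist, min_eq_left]
    exact le_min (by linarith) (by linarith)
end
end
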